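/- (Example 3.1: nonuniqueness for the Volterra neural field equation on the whole line.) Let ω(x) = (1/√(2π)) exp(−x²/2) be the standard Gaussian, so that ∫_ℝ ω(y) dy = 1. For every V ∈ ℝ, the function u(t,x) = V·exp(−e^{−t})·ω(x) satisfies u(t,x) = ∫_{−∞}^t ∫_ℝ e^{−s} ω(x) u(s,y) dy ds for all t ∈ ℝ and x ∈ ℝ; moreover sup_{x∈ℝ} |u(t,x)| → 0 as t → −∞, and u(t,·) is bounded and continuous for each t. Consequently, for distinct values of V these give distinct solutions, so the equation u(t,x) = ∫_{−∞}^t ∫_ℝ e^{−s} ω(x) u(s,y) dy ds has infinitely many solutions in C((−∞,b], BC(ℝ,ℝ)). -/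

import Mathlib

open Set Filter Topology MeasureTheory Real

noncomputable section

/-- The standard Gaussian density `ω(x) = (1/√(2π)) exp(−x²/2)`. -/
def gaussOmega (x : ℝ) : ℝ := (1 / Real.sqrt (2 * π)) * Real.exp (-x ^ 2 / 2)

lemma gaussOmega_nonneg (x : ℝ) : 0 ≤ gaussOmega x := by
  unfold gaussOmega
  positivity

lemma gaussOmega_pos (x : ℝ) : 0 < gaussOmega x := by
  unfold gaussOmega
  have : 0 < Real.sqrt (2 * π) := Real.sqrt_pos.2 (by positivity)
  positivity

lemma gaussOmega_le (x : ℝ) : gaussOmega x ≤ gaussOmega 0 := by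
  unfold gaussOmega
  apply mul_le_mul_of_nonneg_left _ (by positivity)
  exact Real.exp_le_exp.2 (by nlinarith [sq_nonneg x])

lemma gaussOmega_integrable : Integrable gaussOmega := by
  have h : Integrable (fun x : ℝ => Real.exp (-(1/2) * x ^ 2)) := integrable_exp_neg_mul_sq (by norm_num)
  have := h.const_mul (1 / Real.sqrt (2 * π))
  refine this.congr (Filter.Eventually.of_forall fun x => ?_)
  unfold gaussOmega
  ring_nf

lemma gaussOmega_integral : (∫ y : ℝ, gaussOmega y) = 1 := by
  have h : (∫ x : ℝ, Real.exp (-(1/2) * x ^ 2)) = Real.sqrt (π / (1/2)) := integral_gaussian (1/2)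
  have e : ∀ x : ℝ, gaussOmega x = (1 / Real.sqrt (2 * π)) * Real.exp (-(1/2) * x ^ 2) := by
    intro x; unfold gaussOmega; ring_nf
  calc (∫ y : ℝ, gaussOmega y) = ∫ y : ℝ, (1 / Real.sqrt (2 * π)) * Real.exp (-(1/2) * y ^ 2) := by
        simp only [e]
    _ = (1 / Real.sqrt (2 * π)) * Real.sqrt (π / (1/2)) := by rw [MeasureTheory.integral_const_mul, h]
    _ = 1 := by
        rw [show π / (1/2 : ℝ) = 2 * π by ring]
        field_simp

lemma keyTendsto : Tendsto (fun s : ℝ => Real.exp (-Real.exp (-s))) atBot (𝓝 0) := by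
  have h1 : Tendsto (fun s : ℝ => Real.exp (-s)) atBot atTop :=
    Real.tendsto_exp_atTop.comp tendsto_neg_atBot_atTop
  have h2 : Tendsto (fun s : ℝ => -Real.exp (-s)) atBot atBot :=
    tendsto_neg_atTop_atBot.comp h1
  exact Real.tendsto_exp_atBot.comp h2

lemma sqBound (x : ℝ) (hx : 0 ≤ x) : x ^ 2 * Real.exp (-x) ≤ 4 := by
  have h1 : x / 2 + 1 ≤ Real.exp (x / 2) := Real.add_one_le_exp (x / 2)
  have h2 : Real.exp (x / 2) * Real.exp (x / 2) = Real.exp x := by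
    rw [← Real.exp_add]; ring_nf
  have h3 : Real.exp x * Real.exp (-x) = 1 := by rw [← Real.exp_add]; simp
  have h4 : x ^ 2 ≤ 4 * Real.exp x := by nlinarith [Real.exp_pos (x / 2)]
  nlinarith [Real.exp_pos (-x), Real.exp_pos x]

lemma keyBound (s : ℝ) : Real.exp (-s) * Real.exp (-Real.exp (-s)) ≤ 4 * Real.exp s := by
  have h1 : Real.exp (-s) ^ 2 * Real.exp (-Real.exp (-s)) ≤ 4 :=
    sqBound _ (Real.exp_pos _).le
  have h2 : Real.exp s * Real.exp (-s) = 1 := by rw [← Real.exp_add]; simp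
  nlinarith [Real.exp_pos s, Real.exp_pos (-s), Real.exp_pos (-Real.exp (-s))]

lemma keyIntegrable (t : ℝ) :
    IntegrableOn (fun s => Real.exp (-s) * Real.exp (-Real.exp (-s))) (Iic t) := by
  apply Integrable.mono' ((integrableOn_exp_Iic t).const_mul 4)
  · exact (Continuous.mul (by continuity) (by continuity)).aestronglyMeasurable
  · refine Filter.Eventually.of_forall fun s => ?_
    rw [Real.norm_eq_abs, abs_of_nonneg (by positivity)]
    exact keyBound s

lemma keyIntegral (t : ℝ) :
    (∫ s in Iic t, Real.exp (-s) * Real.exp (-Real.exp (-s))) = Real.exp (-Real.exp (-t)) := by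
  have hderiv : ∀ s ∈ Iic t, HasDerivAt (fun s => Real.exp (-Real.exp (-s)))
      (Real.exp (-s) * Real.exp (-Real.exp (-s))) s := by
    intro s _
    have h1 : HasDerivAt (fun s : ℝ => -Real.exp (-s)) (Real.exp (-s)) s := by
      have h0 : HasDerivAt (fun s : ℝ => Real.exp (-s)) (Real.exp (-s) * (-1)) s :=
        (Real.hasDerivAt_exp (-s)).comp s (hasDerivAt_neg s)
      exact (by simpa using h0.neg : HasDerivAt (-fun s : ℝ => Real.exp (-s)) (Real.exp (-s)) s)
    have := (Real.hasDerivAt_exp (-Real.exp (-s))).comp s h1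
    simpa [mul_comm, Function.comp_def] using this
  have := integral_Iic_of_hasDerivAt_of_tendsto' hderiv (keyIntegrable t) keyTendsto
  simpa using this

lemma sSup_eq (c : ℝ) :
    sSup (Set.range fun x : ℝ => |c * gaussOmega x|) = |c| * gaussOmega 0 := by
  apply IsGreatest.csSup_eq
  constructor
  · refine ⟨0, ?_⟩
    show |c * gaussOmega 0| = _
    rw [abs_mul, abs_of_nonneg (gaussOmega_nonneg 0)]
  · rintro _ ⟨x, rfl⟩
    show |c * gaussOmega x| ≤ _
    rw [abs_mul, abs_of_nonneg (gaussOmega_nonneg x)]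
    exact mul_le_mul_of_nonneg_left (gaussOmega_le x) (abs_nonneg c)

lemma solEq (V t x : ℝ) : V * Real.exp (-Real.exp (-t)) * gaussOmega x =
    ∫ s in Set.Iic t, ∫ y : ℝ,
      Real.exp (-s) * gaussOmega x * (V * Real.exp (-Real.exp (-s)) * gaussOmega y) := by
  have inner : ∀ s : ℝ, (∫ y : ℝ,
      Real.exp (-s) * gaussOmega x * (V * Real.exp (-Real.exp (-s)) * gaussOmega y))
      = (V * gaussOmega x) * (Real.exp (-s) * Real.exp (-Real.exp (-s))) := by
    intro s
    calc (∫ y : ℝ, Real.exp (-s) * gaussOmega x * (V * Real.exp (-Real.exp (-s)) * gaussOmega y))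
        = ∫ y : ℝ, (Real.exp (-s) * gaussOmega x * (V * Real.exp (-Real.exp (-s)))) * gaussOmega y := by
          congr 1; ext y; ring
      _ = (Real.exp (-s) * gaussOmega x * (V * Real.exp (-Real.exp (-s)))) * ∫ y : ℝ, gaussOmega y :=
          MeasureTheory.integral_const_mul _ _
      _ = (V * gaussOmega x) * (Real.exp (-s) * Real.exp (-Real.exp (-s))) := by
          rw [gaussOmega_integral]; ring
  refine Eq.symm ?_
  calc (∫ s in Set.Iic t, ∫ y : ℝ,
      Real.exp (-s) * gaussOmega x * (V * Real.exp (-Real.exp (-s)) * gaussOmega y))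
      = ∫ s in Set.Iic t, (V * gaussOmega x) * (Real.exp (-s) * Real.exp (-Real.exp (-s))) := by
        simp only [inner]
    _ = (V * gaussOmega x) * ∫ s in Set.Iic t, Real.exp (-s) * Real.exp (-Real.exp (-s)) :=
        MeasureTheory.integral_const_mul _ _
    _ = V * Real.exp (-Real.exp (-t)) * gaussOmega x := by rw [keyIntegral]; ring

lemma solTendsto (V : ℝ) : Tendsto (fun t => sSup (Set.range fun x : ℝ =>
    |V * Real.exp (-Real.exp (-t)) * gaussOmega x|)) atBot (𝓝 0) := by
  have he : ∀ t : ℝ, sSup (Set.range fun x : ℝ => |V * Real.exp (-Real.exp (-t)) * gaussOmega x|)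
      = |V * Real.exp (-Real.exp (-t))| * gaussOmega 0 := fun t => sSup_eq _
  simp only [he]
  have hc : Continuous (fun a : ℝ => |V * a| * gaussOmega 0) := by continuity
  have := (hc.tendsto 0).comp keyTendsto
  simpa [Function.comp_def] using this

lemma solDistinct (V₁ V₂ : ℝ) (h : V₁ ≠ V₂) :
    (fun (t x : ℝ) => V₁ * Real.exp (-Real.exp (-t)) * gaussOmega x) ≠
      (fun (t x : ℝ) => V₂ * Real.exp (-Real.exp (-t)) * gaussOmega x) := by
  intro heq
  have := congrFun (congrFun heq 0) 0
  have hne : Real.exp (-Real.exp (-(0:ℝ))) * gaussOmega 0 ≠ 0 :=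
    mul_ne_zero (Real.exp_ne_zero _) (gaussOmega_pos 0).ne'
  apply h
  have h2 : V₁ * (Real.exp (-Real.exp (-(0:ℝ))) * gaussOmega 0)
      = V₂ * (Real.exp (-Real.exp (-(0:ℝ))) * gaussOmega 0) := by
    rw [← mul_assoc, ← mul_assoc]; exact this
  exact mul_right_cancel₀ hne h2

/-- Example 3.1: nonuniqueness for the Volterra neural field equation on the whole line.
For every `V`, `u(t,x) = V·exp(−e^{−t})·ω(x)` solves
`u(t,x) = ∫_{−∞}^t ∫_ℝ e^{−s} ω(x) u(s,y) dy ds`, tends to `0` in sup norm as `t → −∞`, and is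
bounded and continuous in `x`; distinct `V` give distinct solutions, hence the equation has
infinitely many solutions in `C((−∞,b], BC(ℝ,ℝ))`. -/
theorem example31_nonuniqueness :
    (∫ y : ℝ, gaussOmega y) = 1 ∧
    (∀ V : ℝ,
      (∀ t x : ℝ, V * Real.exp (-Real.exp (-t)) * gaussOmega x =
        ∫ s in Set.Iic t, ∫ y : ℝ,
          Real.exp (-s) * gaussOmega x * (V * Real.exp (-Real.exp (-s)) * gaussOmega y)) ∧
      Tendsto (fun t => sSup (Set.range fun x : ℝ =>
        |V * Real.exp (-Real.exp (-t)) * gaussOmega x|)) atBot (𝓝 0) ∧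
      (∀ t : ℝ, Continuous (fun x : ℝ => V * Real.exp (-Real.exp (-t)) * gaussOmega x) ∧
        ∃ C : ℝ, ∀ x : ℝ, |V * Real.exp (-Real.exp (-t)) * gaussOmega x| ≤ C)) ∧
    (∀ V₁ V₂ : ℝ, V₁ ≠ V₂ →
      (fun (t x : ℝ) => V₁ * Real.exp (-Real.exp (-t)) * gaussOmega x) ≠
        (fun (t x : ℝ) => V₂ * Real.exp (-Real.exp (-t)) * gaussOmega x)) ∧
    {u : ℝ → ℝ → ℝ |
      (∀ t : ℝ, Continuous (u t) ∧ ∃ C : ℝ, ∀ x : ℝ, |u t x| ≤ C) ∧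
      Tendsto (fun t => sSup (Set.range fun x : ℝ => |u t x|)) atBot (𝓝 0) ∧
      ∀ t x : ℝ, u t x =
        ∫ s in Set.Iic t, ∫ y : ℝ, Real.exp (-s) * gaussOmega x * u s y}.Infinite := by
  have hcont : ∀ V t : ℝ, Continuous (fun x : ℝ => V * Real.exp (-Real.exp (-t)) * gaussOmega x) ∧
      ∃ C : ℝ, ∀ x : ℝ, |V * Real.exp (-Real.exp (-t)) * gaussOmega x| ≤ C := by
    intro V t
    constructor
    · unfold gaussOmega; continuity
    · refine ⟨|V * Real.exp (-Real.exp (-t))| * gaussOmega 0, fun x => ?_⟩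
      rw [abs_mul, abs_of_nonneg (gaussOmega_nonneg x)]
      exact mul_le_mul_of_nonneg_left (gaussOmega_le x) (abs_nonneg _)
  refine ⟨gaussOmega_integral, fun V => ⟨solEq V, solTendsto V, hcont V⟩, solDistinct, ?_⟩
  refine Set.infinite_of_injective_forall_mem
    (f := fun V : ℝ => fun (t x : ℝ) => V * Real.exp (-Real.exp (-t)) * gaussOmega x) ?_ ?_
  · intro a b hab
    by_contra hne
    exact solDistinct a b hne hab
  · intro V
    exact ⟨fun t => hcont V t, solTendsto V, solEq V⟩
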